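/- Assume both causality axioms for T and T'_l on subsets of {1,…,n}. Let P ⊔ Q = {1,…,n−1} be a partition with P ≠ ∅ and write Qn := Q ∪ {n}. If x(Qn) ≥ x(P) then A′_{n,l} = −[T'_l(Qn)·T(P) + T(Qn)·T'_l(P)] for every l, and if x(P) ≥ x(Qn) then R′_{n,l} = −[T'_l(P)·T(Qn) + T(P)·T'_l(Qn)] for every l. -/

import Mathlib

/-- The Minkowski quadratic form on `ℝ⁴`. -/
def minkQ (x : Fin 4 → ℝ) : ℝ := x 0 ^ 2 - x 1 ^ 2 - x 2 ^ 2 - x 3 ^ 2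

/-- The open backward light cone `V⁻`. -/
def Vminus : Set (Fin 4 → ℝ) := {x | 0 < minkQ x ∧ x 0 < 0}

/-- Sum over all ordered partitions of `X` into `r ≥ 1` nonempty pairwise disjoint blocks
`X₁, …, X_r` of `(-1)^r * T X₁ * ⋯ * T X_r` (with value `1` for `X = ∅`), computed by peeling
off the first block. -/
def opSum {A : Type*} [Ring A] {ι : Type*} [DecidableEq ι]
    (T : Finset ι → A) (X : Finset ι) : A :=
  if _hX : X = ∅ then 1
  else
    ∑ Y ∈ (X.powerset.filter (fun Y => Y ≠ ∅)).attach,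
      (-1 : A) * T Y.1 * opSum T (X \ Y.1)
termination_by X.card
decreasing_by
  have hY := Y.2
  simp only [Finset.mem_filter, Finset.mem_powerset] at hY
  have h1 : Y.1.card ≤ X.card := Finset.card_le_card hY.1
  have h2 : 0 < Y.1.card := Finset.card_pos.mpr (Finset.nonempty_iff_ne_empty.mpr hY.2)
  rw [Finset.card_sdiff, Finset.inter_eq_left.mpr hY.1]
  omega

/-- The antichronological products `T̄`, defined by `T̄(∅) = 1` and
`(−1)^{|X|} T̄(X) = Σ_{r=1}^{|X|} (−1)^r Σ T(X₁)⋯T(X_r)`, the inner sum running over all ordered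
partitions of `X` into `r` nonempty pairwise disjoint subsets. -/
def chronoBar {A : Type*} [Ring A] {ι : Type*} [DecidableEq ι]
    (T : Finset ι → A) (X : Finset ι) : A :=
  (-1 : A) ^ X.card * opSum T X

/-- Sum over all ordered partitions of `X` into `r ≥ 1` nonempty pairwise disjoint blocks of
`(-1)^r * T X₁ ⋯ T' X_k ⋯ T X_r`, with `T'` replacing `T` in exactly one block (value `0` for
`X = ∅`), computed by peeling off the first block. -/
def opSumD {A : Type*} [Ring A] {ι : Type*} [DecidableEq ι]
    (T T' : Finset ι → A) (X : Finset ι) : A :=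
  if _hX : X = ∅ then 0
  else
    ∑ Y ∈ (X.powerset.filter (fun Y => Y ≠ ∅)).attach,
      (-1 : A) * (T' Y.1 * opSum T (X \ Y.1) + T Y.1 * opSumD T T' (X \ Y.1))
termination_by X.card
decreasing_by
  have hY := Y.2
  simp only [Finset.mem_filter, Finset.mem_powerset] at hY
  have h1 : Y.1.card ≤ X.card := Finset.card_le_card hY.1
  have h2 : 0 < Y.1.card := Finset.card_pos.mpr (Finset.nonempty_iff_ne_empty.mpr hY.2)
  rw [Finset.card_sdiff, Finset.inter_eq_left.mpr hY.1]
  omega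

/-- The barred family `T̄'`, defined by `T̄'(∅) = 0` and
`(−1)^{|X|} T̄'(X) = Σ_{r=1}^{|X|} (−1)^r Σ Σ_{k=1}^{r} T(X₁)⋯T'(X_k)⋯T(X_r)`, the inner sum over
ordered partitions of `X` into `r` nonempty pairwise disjoint blocks, with `T'` replacing `T`
in exactly one block. -/
def chronoBarD {A : Type*} [Ring A] {ι : Type*} [DecidableEq ι]
    (T T' : Finset ι → A) (X : Finset ι) : A :=
  (-1 : A) ^ X.card * opSumD T T' X

/-- The advanced sum `A′_{n,l} := Σ (−1)^{|Y|} [T'_l(X)·T̄(Y) + T(X)·T̄'_l(Y)]`, over all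
partitions `X ⊔ Y = {1,…,n}` with `n ∈ X` (here `lst` plays the role of `n`) and `Y ≠ ∅`. -/
def advPD {A : Type*} [Ring A] {ι : Type*} [Fintype ι] [DecidableEq ι]
    (T T' : Finset ι → A) (lst : ι) : A :=
  ∑ Y ∈ (Finset.univ.erase lst).powerset.filter (fun Y => Y ≠ ∅),
    (-1 : A) ^ Y.card * (T' Yᶜ * chronoBar T Y + T Yᶜ * chronoBarD T T' Y)

/-- The retarded sum `R′_{n,l} := Σ (−1)^{|Y|} [T̄'_l(Y)·T(X) + T̄(Y)·T'_l(X)]`, over all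
partitions `X ⊔ Y = {1,…,n}` with `n ∈ X` (here `lst` plays the role of `n`) and `Y ≠ ∅`. -/
def retPD {A : Type*} [Ring A] {ι : Type*} [Fintype ι] [DecidableEq ι]
    (T T' : Finset ι → A) (lst : ι) : A :=
  ∑ Y ∈ (Finset.univ.erase lst).powerset.filter (fun Y => Y ≠ ∅),
    (-1 : A) ^ Y.card * (chronoBarD T T' Y * T Yᶜ + chronoBar T Y * T' Yᶜ)

section Helpers

open Finset

variable {A : Type*} [Ring A] {ι : Type*} [DecidableEq ι]

lemma opSum_empty (T : Finset ι → A) : opSum T ∅ = 1 := by rw [opSum]; simp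

lemma opSumD_empty (T T' : Finset ι → A) : opSumD T T' ∅ = 0 := by rw [opSumD]; simp

lemma opSum_rec (T : Finset ι → A) {X : Finset ι} (hX : X ≠ ∅) :
    ∑ Z ∈ X.powerset.filter (fun Y => Y ≠ ∅), T Z * opSum T (X \ Z) = -opSum T X := by
  rw [opSum, dif_neg hX,
    Finset.sum_attach (X.powerset.filter (fun Y => Y ≠ ∅))
      (fun Z => (-1 : A) * T Z * opSum T (X \ Z))]
  simp [neg_mul, one_mul, Finset.sum_neg_distrib]

lemma opSumD_rec (T T' : Finset ι → A) (X : Finset ι) :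
    ∑ Z ∈ X.powerset.filter (fun Y => Y ≠ ∅),
      (T' Z * opSum T (X \ Z) + T Z * opSumD T T' (X \ Z)) = -opSumD T T' X := by
  by_cases hX : X = ∅
  · subst hX; simp [opSumD_empty, Finset.filter_singleton]
  · rw [opSumD, dif_neg hX,
      Finset.sum_attach (X.powerset.filter (fun Y => Y ≠ ∅))
        (fun Z => (-1 : A) * (T' Z * opSum T (X \ Z) + T Z * opSumD T T' (X \ Z))),
      Finset.sum_congr rfl (fun Z _ => neg_one_mul
        (T' Z * opSum T (X \ Z) + T Z * opSumD T T' (X \ Z))),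
      Finset.sum_neg_distrib, neg_neg]

lemma filter_eq_empty_powerset (X : Finset ι) :
    X.powerset.filter (fun Z => ¬ Z ≠ ∅) = {∅} := by
  ext Z
  simp only [Finset.mem_filter, Finset.mem_powerset, not_not, Finset.mem_singleton]
  exact ⟨fun h => h.2, fun h => ⟨h ▸ Finset.empty_subset X, h⟩⟩

lemma convL (T : Finset ι → A) (hT1 : T ∅ = 1) (X : Finset ι) :
    ∑ Z ∈ X.powerset, T Z * opSum T (X \ Z) = if X = ∅ then 1 else 0 := by
  by_cases hX : X = ∅
  · subst hX; simp [opSum_empty, hT1]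
  · rw [if_neg hX,
      ← Finset.sum_filter_add_sum_filter_not X.powerset (fun Z => Z ≠ ∅),
      opSum_rec T hX, filter_eq_empty_powerset, Finset.sum_singleton, hT1,
      Finset.sdiff_empty, one_mul, neg_add_cancel]

lemma convLD (T T' : Finset ι → A) (hT1 : T ∅ = 1) (hT'0 : T' ∅ = 0) (X : Finset ι) :
    ∑ Z ∈ X.powerset,
      (T' Z * opSum T (X \ Z) + T Z * opSumD T T' (X \ Z)) = 0 := by
  rw [← Finset.sum_filter_add_sum_filter_not X.powerset (fun Z => Z ≠ ∅),
    opSumD_rec, filter_eq_empty_powerset, Finset.sum_singleton, hT1, hT'0,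
    Finset.sdiff_empty, zero_mul, one_mul, zero_add, neg_add_cancel]

end Helpers
section Helpers2

open Finset

variable {ι : Type*} [DecidableEq ι] {M : Type*} [AddCommMonoid M]

lemma sum_powerset_sdiff (X : Finset ι) (f : Finset ι → M) :
    ∑ Z ∈ X.powerset, f (X \ Z) = ∑ Z ∈ X.powerset, f Z := by
  refine Finset.sum_nbij' (fun Z => X \ Z) (fun Z => X \ Z) ?_ ?_ ?_ ?_ ?_
  · intro Z _; exact Finset.mem_powerset.mpr (Finset.sdiff_subset)
  · intro Z _; exact Finset.mem_powerset.mpr (Finset.sdiff_subset)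
  · intro Z hZ; exact Finset.sdiff_sdiff_eq_self (Finset.mem_powerset.mp hZ)
  · intro Z hZ; exact Finset.sdiff_sdiff_eq_self (Finset.mem_powerset.mp hZ)
  · intro Z _; rfl

lemma sum_powerset_sigma (X : Finset ι) (g : Finset ι → Finset ι → M) :
    ∑ Z ∈ X.powerset, ∑ W ∈ Z.powerset, g W Z
      = ∑ W ∈ X.powerset, ∑ Z ∈ (X \ W).powerset, g W (W ∪ Z) := by
  rw [Finset.sum_sigma' X.powerset (fun Z => Z.powerset) (fun Z W => g W Z),
    Finset.sum_sigma' X.powerset (fun W => (X \ W).powerset) (fun W Z => g W (W ∪ Z))]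
  refine Finset.sum_nbij' (fun p => ⟨p.2, p.1 \ p.2⟩) (fun p => ⟨p.1 ∪ p.2, p.1⟩) ?_ ?_ ?_ ?_ ?_
  · rintro ⟨Z, W⟩ hp
    simp only [Finset.mem_sigma, Finset.mem_powerset] at hp ⊢
    exact ⟨hp.2.trans hp.1, Finset.sdiff_subset_sdiff hp.1 le_rfl⟩
  · rintro ⟨W, Z⟩ hp
    simp only [Finset.mem_sigma, Finset.mem_powerset] at hp ⊢
    exact ⟨Finset.union_subset hp.1 (hp.2.trans Finset.sdiff_subset),
      Finset.subset_union_left⟩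
  · rintro ⟨Z, W⟩ hp
    simp only [Finset.mem_sigma, Finset.mem_powerset] at hp
    dsimp only
    rw [Finset.union_sdiff_of_subset hp.2]
  · rintro ⟨W, Z⟩ hp
    simp only [Finset.mem_sigma, Finset.mem_powerset] at hp
    have hdis : Disjoint W Z :=
      Finset.disjoint_of_subset_right hp.2 (Finset.disjoint_sdiff)
    dsimp only
    rw [Finset.union_sdiff_cancel_left hdis]
  · rintro ⟨Z, W⟩ hp
    simp only [Finset.mem_sigma, Finset.mem_powerset] at hp
    dsimp only
    rw [Finset.union_sdiff_of_subset hp.2]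

lemma sum_powerset_union {Xa Xb : Finset ι} (hd : Disjoint Xa Xb) (f : Finset ι → M) :
    ∑ Z ∈ (Xa ∪ Xb).powerset, f Z
      = ∑ Za ∈ Xa.powerset, ∑ Zb ∈ Xb.powerset, f (Za ∪ Zb) := by
  rw [← Finset.sum_product' Xa.powerset Xb.powerset (fun Za Zb => f (Za ∪ Zb))]
  refine Finset.sum_nbij' (fun Z => (Z ∩ Xa, Z ∩ Xb)) (fun p => p.1 ∪ p.2) ?_ ?_ ?_ ?_ ?_
  · intro Z _
    simp only [Finset.mem_product, Finset.mem_powerset]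
    exact ⟨Finset.inter_subset_right, Finset.inter_subset_right⟩
  · rintro ⟨Za, Zb⟩ hp
    simp only [Finset.mem_product, Finset.mem_powerset] at hp ⊢
    exact Finset.union_subset_union hp.1 hp.2
  · intro Z hZ
    simp only [Finset.mem_powerset] at hZ
    dsimp only
    rw [← Finset.inter_union_distrib_left, Finset.inter_eq_left.mpr hZ]
  · rintro ⟨Za, Zb⟩ hp
    simp only [Finset.mem_product, Finset.mem_powerset] at hp
    have h1 : (Za ∪ Zb) ∩ Xa = Za := by
      rw [Finset.union_inter_distrib_right, Finset.inter_eq_left.mpr hp.1,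
        Finset.disjoint_iff_inter_eq_empty.mp (Finset.disjoint_of_subset_left hp.2 hd.symm), Finset.union_empty]
    have h2 : (Za ∪ Zb) ∩ Xb = Zb := by
      rw [Finset.union_inter_distrib_right, Finset.inter_eq_left.mpr hp.2,
        Finset.disjoint_iff_inter_eq_empty.mp (Finset.disjoint_of_subset_left hp.1 hd), Finset.empty_union]
    dsimp only
    rw [h1, h2]
  · intro Z hZ
    simp only [Finset.mem_powerset] at hZ
    dsimp only
    rw [← Finset.inter_union_distrib_left, Finset.inter_eq_left.mpr hZ]

end Helpers2
section Helpers3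

open Finset

variable {A : Type*} [Ring A] {ι : Type*} [DecidableEq ι]

lemma opSum_key (T : Finset ι → A) (Z : Finset ι) :
    opSum T Z = (if Z = ∅ then 1 else 0)
      - ∑ W ∈ Z.powerset, (if W ≠ ∅ then T W * opSum T (Z \ W) else 0) := by
  rw [← Finset.sum_filter]
  by_cases hZ : Z = ∅
  · subst hZ; simp [opSum_empty, Finset.filter_singleton]
  · rw [if_neg hZ, opSum_rec T hZ, zero_sub, neg_neg]

lemma opSumD_key (T T' : Finset ι → A) (Z : Finset ι) :
    opSumD T T' Z = - ∑ W ∈ Z.powerset,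
      (if W ≠ ∅ then T' W * opSum T (Z \ W) + T W * opSumD T T' (Z \ W) else 0) := by
  rw [← Finset.sum_filter, opSumD_rec, neg_neg]

lemma convR (T : Finset ι → A) (hT1 : T ∅ = 1) (X : Finset ι) :
    ∑ Z ∈ X.powerset, opSum T Z * T (X \ Z) = if X = ∅ then 1 else 0 := by
  induction X using Finset.strongInduction with
  | _ X ih =>
    by_cases hX : X = ∅
    · subst hX; simp [opSum_empty, hT1]
    rw [if_neg hX]
    have step1 : ∀ Z ∈ X.powerset, opSum T Z * T (X \ Z)
        = (if Z = ∅ then T (X \ Z) else 0)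
          - ∑ W ∈ Z.powerset,
              (if W ≠ ∅ then T W * opSum T (Z \ W) else 0) * T (X \ Z) := by
      intro Z _
      rw [opSum_key T Z, sub_mul, ite_mul, one_mul, zero_mul, Finset.sum_mul]
    rw [Finset.sum_congr rfl step1, Finset.sum_sub_distrib]
    have e1 : ∑ Z ∈ X.powerset, (if Z = ∅ then T (X \ Z) else 0) = T X := by
      rw [Finset.sum_ite_eq' X.powerset ∅ (fun Z => T (X \ Z)),
        if_pos (Finset.empty_mem_powerset X), Finset.sdiff_empty]
    have e2 : ∑ Z ∈ X.powerset, ∑ W ∈ Z.powerset,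
        (if W ≠ ∅ then T W * opSum T (Z \ W) else 0) * T (X \ Z) = T X := by
      rw [sum_powerset_sigma X
        (fun W Z => (if W ≠ ∅ then T W * opSum T (Z \ W) else 0) * T (X \ Z))]
      have inner : ∀ W ∈ X.powerset,
          ∑ Z ∈ (X \ W).powerset,
            (if W ≠ ∅ then T W * opSum T ((W ∪ Z) \ W) else 0) * T (X \ (W ∪ Z))
          = if W ≠ ∅ then T W * (if X \ W = ∅ then 1 else 0) else 0 := by
        intro W hW
        by_cases hWe : W = ∅
        · simp [hWe]
        · rw [if_pos hWe]
          have hrw : ∀ Z ∈ (X \ W).powerset,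
              (if W ≠ ∅ then T W * opSum T ((W ∪ Z) \ W) else 0) * T (X \ (W ∪ Z))
              = T W * (opSum T Z * T ((X \ W) \ Z)) := by
            intro Z hZ
            have hdis : Disjoint W Z := Finset.disjoint_of_subset_right
              (Finset.mem_powerset.mp hZ) Finset.disjoint_sdiff
            have h1 : (W ∪ Z) \ W = Z := Finset.union_sdiff_cancel_left hdis
            have h2 : X \ (W ∪ Z) = (X \ W) \ Z := by
              ext i; simp only [Finset.mem_sdiff, Finset.mem_union]; tauto
            rw [if_pos hWe, h1, h2, mul_assoc]
          rw [Finset.sum_congr rfl hrw, ← Finset.mul_sum,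
            ih (X \ W) (Finset.sdiff_ssubset (Finset.mem_powerset.mp hW)
              (Finset.nonempty_iff_ne_empty.mpr hWe))]
      rw [Finset.sum_congr rfl inner,
        Finset.sum_eq_single_of_mem X (Finset.mem_powerset.mpr (Finset.Subset.refl X))
          ?_, if_pos hX, Finset.sdiff_self, if_pos rfl, mul_one]
      intro W hW hne
      by_cases hWe : W = ∅
      · simp [hWe]
      · rw [if_pos hWe, if_neg, mul_zero]
        intro hempty
        exact hne (Finset.Subset.antisymm (Finset.mem_powerset.mp hW)
          (Finset.sdiff_eq_empty_iff_subset.mp hempty))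
    rw [e1, e2, sub_self]

lemma convRD (T T' : Finset ι → A) (hT1 : T ∅ = 1) (hT'0 : T' ∅ = 0) (X : Finset ι) :
    ∑ Z ∈ X.powerset,
      (opSumD T T' Z * T (X \ Z) + opSum T Z * T' (X \ Z)) = 0 := by
  induction X using Finset.strongInduction with
  | _ X ih =>
    by_cases hX : X = ∅
    · subst hX; simp [opSum_empty, opSumD_empty, hT'0]
    have step1 : ∀ Z ∈ X.powerset,
        opSumD T T' Z * T (X \ Z) + opSum T Z * T' (X \ Z)
        = (if Z = ∅ then T' (X \ Z) else 0)
          - ∑ W ∈ Z.powerset, (if W ≠ ∅ then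
              (T' W * opSum T (Z \ W) + T W * opSumD T T' (Z \ W)) * T (X \ Z)
                + (T W * opSum T (Z \ W)) * T' (X \ Z) else 0) := by
      intro Z _
      rw [opSumD_key T T' Z, opSum_key T Z, neg_mul, sub_mul, ite_mul, one_mul, zero_mul,
        Finset.sum_mul, Finset.sum_mul]
      have hcomb : ∀ W ∈ Z.powerset,
          (if W ≠ ∅ then T' W * opSum T (Z \ W) + T W * opSumD T T' (Z \ W) else 0)
              * T (X \ Z)
            + (if W ≠ ∅ then T W * opSum T (Z \ W) else 0) * T' (X \ Z)
          = (if W ≠ ∅ then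
              (T' W * opSum T (Z \ W) + T W * opSumD T T' (Z \ W)) * T (X \ Z)
                + (T W * opSum T (Z \ W)) * T' (X \ Z) else 0) := by
        intro W _; by_cases hW : W = ∅ <;> simp [hW]
      rw [← Finset.sum_congr rfl hcomb, Finset.sum_add_distrib]
      abel
    rw [Finset.sum_congr rfl step1, Finset.sum_sub_distrib]
    have e1 : ∑ Z ∈ X.powerset, (if Z = ∅ then T' (X \ Z) else 0) = T' X := by
      rw [Finset.sum_ite_eq' X.powerset ∅ (fun Z => T' (X \ Z)),
        if_pos (Finset.empty_mem_powerset X), Finset.sdiff_empty]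
    have e2 : ∑ Z ∈ X.powerset, ∑ W ∈ Z.powerset, (if W ≠ ∅ then
          (T' W * opSum T (Z \ W) + T W * opSumD T T' (Z \ W)) * T (X \ Z)
            + (T W * opSum T (Z \ W)) * T' (X \ Z) else 0) = T' X := by
      rw [sum_powerset_sigma X (fun W Z => (if W ≠ ∅ then
          (T' W * opSum T (Z \ W) + T W * opSumD T T' (Z \ W)) * T (X \ Z)
            + (T W * opSum T (Z \ W)) * T' (X \ Z) else 0))]
      have inner : ∀ W ∈ X.powerset,
          ∑ Z ∈ (X \ W).powerset, (if W ≠ ∅ then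
            (T' W * opSum T ((W ∪ Z) \ W) + T W * opSumD T T' ((W ∪ Z) \ W))
                * T (X \ (W ∪ Z))
              + (T W * opSum T ((W ∪ Z) \ W)) * T' (X \ (W ∪ Z)) else 0)
          = if W ≠ ∅ then T' W * (if X \ W = ∅ then 1 else 0) else 0 := by
        intro W hW
        by_cases hWe : W = ∅
        · simp [hWe]
        · rw [if_pos hWe]
          have hrw : ∀ Z ∈ (X \ W).powerset,
              (if W ≠ ∅ then
                (T' W * opSum T ((W ∪ Z) \ W) + T W * opSumD T T' ((W ∪ Z) \ W))
                    * T (X \ (W ∪ Z))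
                  + (T W * opSum T ((W ∪ Z) \ W)) * T' (X \ (W ∪ Z)) else 0)
              = T' W * (opSum T Z * T ((X \ W) \ Z))
                + T W * (opSumD T T' Z * T ((X \ W) \ Z)
                    + opSum T Z * T' ((X \ W) \ Z)) := by
            intro Z hZ
            have hdis : Disjoint W Z := Finset.disjoint_of_subset_right
              (Finset.mem_powerset.mp hZ) Finset.disjoint_sdiff
            have h1 : (W ∪ Z) \ W = Z := Finset.union_sdiff_cancel_left hdis
            have h2 : X \ (W ∪ Z) = (X \ W) \ Z := by
              ext i; simp only [Finset.mem_sdiff, Finset.mem_union]; tauto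
            rw [if_pos hWe, h1, h2]
            noncomm_ring
          rw [Finset.sum_congr rfl hrw, Finset.sum_add_distrib, ← Finset.mul_sum,
            ← Finset.mul_sum, convR T hT1,
            ih (X \ W) (Finset.sdiff_ssubset (Finset.mem_powerset.mp hW)
              (Finset.nonempty_iff_ne_empty.mpr hWe)), mul_zero, add_zero]
      rw [Finset.sum_congr rfl inner,
        Finset.sum_eq_single_of_mem X (Finset.mem_powerset.mpr (Finset.Subset.refl X))
          ?_, if_pos hX, Finset.sdiff_self, if_pos rfl, mul_one]
      intro W hW hne
      by_cases hWe : W = ∅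
      · simp [hWe]
      · rw [if_pos hWe, if_neg, mul_zero]
        intro hempty
        exact hne (Finset.Subset.antisymm (Finset.mem_powerset.mp hW)
          (Finset.sdiff_eq_empty_iff_subset.mp hempty))
    rw [e1, e2, sub_self]

end Helpers3
section Helpers4

open Finset

variable {A : Type*} [Ring A] {ι : Type*} [DecidableEq ι]

lemma sdiff_union_left {Xa Xb Za Zb : Finset ι} (hdab : Disjoint Xa Xb)
    (hZb : Zb ⊆ Xb) : Xa \ (Za ∪ Zb) = Xa \ Za := by
  ext i
  simp only [Finset.mem_sdiff, Finset.mem_union]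
  exact ⟨fun h => ⟨h.1, fun hc => h.2 (Or.inl hc)⟩,
    fun h => ⟨h.1, fun hc => hc.elim h.2
      (fun hc' => (Finset.disjoint_left.mp hdab h.1) (hZb hc'))⟩⟩

lemma sdiff_union_right {Xa Xb Za Zb : Finset ι} (hdab : Disjoint Xa Xb)
    (hZa : Za ⊆ Xa) : Xb \ (Za ∪ Zb) = Xb \ Zb := by
  ext i
  simp only [Finset.mem_sdiff, Finset.mem_union]
  exact ⟨fun h => ⟨h.1, fun hc => h.2 (Or.inr hc)⟩,
    fun h => ⟨h.1, fun hc => hc.elim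
      (fun hc' => (Finset.disjoint_right.mp hdab h.1) (hZa hc')) h.2⟩⟩

lemma union_sdiff_split {Xa Xb Z : Finset ι} :
    (Xa ∪ Xb) \ Z = (Xa \ Z) ∪ (Xb \ Z) := by
  ext i; simp only [Finset.mem_sdiff, Finset.mem_union]; tauto

lemma opSum_factor (T : Finset ι → A) (hT1 : T ∅ = 1) {Sa Sb : Finset ι}
    (hd : Disjoint Sa Sb)
    (hfac : ∀ Za ⊆ Sa, ∀ Zb ⊆ Sb, T (Za ∪ Zb) = T Zb * T Za) :
    ∀ Xa ⊆ Sa, ∀ Xb ⊆ Sb, opSum T (Xa ∪ Xb) = opSum T Xa * opSum T Xb := by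
  suffices h : ∀ N : ℕ, ∀ Xa Xb : Finset ι, Xa ⊆ Sa → Xb ⊆ Sb → (Xa ∪ Xb).card ≤ N →
      opSum T (Xa ∪ Xb) = opSum T Xa * opSum T Xb by
    intro Xa ha Xb hb; exact h (Xa ∪ Xb).card Xa Xb ha hb le_rfl
  intro N
  induction N with
  | zero =>
    intro Xa Xb ha hb hcard
    have hU : Xa ∪ Xb = ∅ := Finset.card_eq_zero.mp (Nat.le_zero.mp hcard)
    have ha' : Xa = ∅ := Finset.subset_empty.mp (hU ▸ Finset.subset_union_left)
    have hb' : Xb = ∅ := Finset.subset_empty.mp (hU ▸ Finset.subset_union_right)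
    rw [hU, ha', hb', opSum_empty, one_mul]
  | succ N ihN =>
    intro Xa Xb ha hb hcard
    by_cases hXX : Xa ∪ Xb = ∅
    · have ha' : Xa = ∅ := Finset.subset_empty.mp (hXX ▸ Finset.subset_union_left)
      have hb' : Xb = ∅ := Finset.subset_empty.mp (hXX ▸ Finset.subset_union_right)
      rw [hXX, ha', hb', opSum_empty, one_mul]
    have hdab : Disjoint Xa Xb :=
      Finset.disjoint_of_subset_left ha (Finset.disjoint_of_subset_right hb hd)
    have hsum : ∑ Z ∈ (Xa ∪ Xb).powerset,
        T Z * (opSum T (Xa \ Z) * opSum T (Xb \ Z)) = 0 := by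
      rw [sum_powerset_union hdab (fun Z => T Z * (opSum T (Xa \ Z) * opSum T (Xb \ Z)))]
      have hbody : ∀ Za ∈ Xa.powerset, ∀ Zb ∈ Xb.powerset,
          T (Za ∪ Zb) * (opSum T (Xa \ (Za ∪ Zb)) * opSum T (Xb \ (Za ∪ Zb)))
          = T Zb * ((T Za * opSum T (Xa \ Za)) * opSum T (Xb \ Zb)) := by
        intro Za hZa Zb hZb
        rw [Finset.mem_powerset] at hZa hZb
        rw [sdiff_union_left hdab hZb, sdiff_union_right hdab hZa,
          hfac Za (hZa.trans ha) Zb (hZb.trans hb)]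
        noncomm_ring
      rw [Finset.sum_congr rfl (fun Za hZa => Finset.sum_congr rfl (hbody Za hZa)),
        Finset.sum_comm]
      have hinner : ∀ Zb ∈ Xb.powerset,
          ∑ Za ∈ Xa.powerset, T Zb * ((T Za * opSum T (Xa \ Za)) * opSum T (Xb \ Zb))
          = T Zb * ((if Xa = ∅ then (1 : A) else 0) * opSum T (Xb \ Zb)) := by
        intro Zb _
        rw [← Finset.mul_sum, ← Finset.sum_mul, convL T hT1 Xa]
      rw [Finset.sum_congr rfl hinner]
      by_cases hXa : Xa = ∅
      · have hXb : Xb ≠ ∅ := by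
          intro hXb; exact hXX (by rw [hXa, hXb, Finset.union_empty])
        simp only [if_pos hXa, one_mul]
        rw [convL T hT1 Xb, if_neg hXb]
      · simp [if_neg hXa]
    have hnot : (Xa ∪ Xb).powerset.filter (fun Z => ¬ Z ≠ ∅) = {∅} :=
      filter_eq_empty_powerset _
    rw [← Finset.sum_filter_add_sum_filter_not (Xa ∪ Xb).powerset (fun Z => Z ≠ ∅)]
      at hsum
    have hne : ∀ Z ∈ (Xa ∪ Xb).powerset.filter (fun Y => Y ≠ ∅),
        T Z * (opSum T (Xa \ Z) * opSum T (Xb \ Z)) = T Z * opSum T ((Xa ∪ Xb) \ Z) := by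
      intro Z hZ
      rw [Finset.mem_filter, Finset.mem_powerset] at hZ
      have hcard2 : ((Xa \ Z) ∪ (Xb \ Z)).card ≤ N := by
        rw [← union_sdiff_split]
        have h3 : ((Xa ∪ Xb) \ Z).card = (Xa ∪ Xb).card - Z.card := by
          rw [Finset.card_sdiff, Finset.inter_eq_left.mpr hZ.1]
        have h4 : 0 < Z.card := Finset.card_pos.mpr (Finset.nonempty_iff_ne_empty.mpr hZ.2)
        have h5 : Z.card ≤ (Xa ∪ Xb).card := Finset.card_le_card hZ.1
        omega
      rw [union_sdiff_split, ihN (Xa \ Z) (Xb \ Z) (Finset.sdiff_subset.trans ha)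
        (Finset.sdiff_subset.trans hb) hcard2]
    rw [Finset.sum_congr rfl hne, opSum_rec T hXX, hnot, Finset.sum_singleton, hT1,
      Finset.sdiff_empty, Finset.sdiff_empty, one_mul] at hsum
    exact neg_add_eq_zero.mp hsum

lemma opSumD_factor (T T' : Finset ι → A) (hT1 : T ∅ = 1) (hT'0 : T' ∅ = 0)
    {Sa Sb : Finset ι} (hd : Disjoint Sa Sb)
    (hfac : ∀ Za ⊆ Sa, ∀ Zb ⊆ Sb, T (Za ∪ Zb) = T Zb * T Za)
    (hfac' : ∀ Za ⊆ Sa, ∀ Zb ⊆ Sb, T' (Za ∪ Zb) = T' Zb * T Za + T Zb * T' Za) :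
    ∀ Xa ⊆ Sa, ∀ Xb ⊆ Sb, opSumD T T' (Xa ∪ Xb)
      = opSumD T T' Xa * opSum T Xb + opSum T Xa * opSumD T T' Xb := by
  suffices h : ∀ N : ℕ, ∀ Xa Xb : Finset ι, Xa ⊆ Sa → Xb ⊆ Sb → (Xa ∪ Xb).card ≤ N →
      opSumD T T' (Xa ∪ Xb)
        = opSumD T T' Xa * opSum T Xb + opSum T Xa * opSumD T T' Xb by
    intro Xa ha Xb hb; exact h (Xa ∪ Xb).card Xa Xb ha hb le_rfl
  intro N
  induction N with
  | zero =>
    intro Xa Xb ha hb hcard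
    have hU : Xa ∪ Xb = ∅ := Finset.card_eq_zero.mp (Nat.le_zero.mp hcard)
    have ha' : Xa = ∅ := Finset.subset_empty.mp (hU ▸ Finset.subset_union_left)
    have hb' : Xb = ∅ := Finset.subset_empty.mp (hU ▸ Finset.subset_union_right)
    rw [hU, ha', hb', opSum_empty, opSumD_empty, one_mul, zero_mul, zero_add]
  | succ N ihN =>
    intro Xa Xb ha hb hcard
    have hdab : Disjoint Xa Xb :=
      Finset.disjoint_of_subset_left ha (Finset.disjoint_of_subset_right hb hd)
    have hsum : ∑ Z ∈ (Xa ∪ Xb).powerset,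
        (T' Z * (opSum T (Xa \ Z) * opSum T (Xb \ Z))
          + T Z * (opSumD T T' (Xa \ Z) * opSum T (Xb \ Z)
              + opSum T (Xa \ Z) * opSumD T T' (Xb \ Z))) = 0 := by
      rw [sum_powerset_union hdab (fun Z => T' Z * (opSum T (Xa \ Z) * opSum T (Xb \ Z))
          + T Z * (opSumD T T' (Xa \ Z) * opSum T (Xb \ Z)
              + opSum T (Xa \ Z) * opSumD T T' (Xb \ Z)))]
      have hbody : ∀ Za ∈ Xa.powerset, ∀ Zb ∈ Xb.powerset,
          T' (Za ∪ Zb) * (opSum T (Xa \ (Za ∪ Zb)) * opSum T (Xb \ (Za ∪ Zb)))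
            + T (Za ∪ Zb) * (opSumD T T' (Xa \ (Za ∪ Zb)) * opSum T (Xb \ (Za ∪ Zb))
                + opSum T (Xa \ (Za ∪ Zb)) * opSumD T T' (Xb \ (Za ∪ Zb)))
          = T' Zb * ((T Za * opSum T (Xa \ Za)) * opSum T (Xb \ Zb))
            + (T Zb * ((T' Za * opSum T (Xa \ Za) + T Za * opSumD T T' (Xa \ Za))
                * opSum T (Xb \ Zb))
              + T Zb * ((T Za * opSum T (Xa \ Za)) * opSumD T T' (Xb \ Zb))) := by
        intro Za hZa Zb hZb
        rw [Finset.mem_powerset] at hZa hZb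
        rw [sdiff_union_left hdab hZb, sdiff_union_right hdab hZa,
          hfac Za (hZa.trans ha) Zb (hZb.trans hb),
          hfac' Za (hZa.trans ha) Zb (hZb.trans hb)]
        noncomm_ring
      rw [Finset.sum_congr rfl (fun Za hZa => Finset.sum_congr rfl (hbody Za hZa)),
        Finset.sum_comm]
      have hinner : ∀ Zb ∈ Xb.powerset,
          ∑ Za ∈ Xa.powerset,
            (T' Zb * ((T Za * opSum T (Xa \ Za)) * opSum T (Xb \ Zb))
              + (T Zb * ((T' Za * opSum T (Xa \ Za) + T Za * opSumD T T' (Xa \ Za))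
                  * opSum T (Xb \ Zb))
                + T Zb * ((T Za * opSum T (Xa \ Za)) * opSumD T T' (Xb \ Zb))))
          = T' Zb * ((if Xa = ∅ then (1 : A) else 0) * opSum T (Xb \ Zb))
            + T Zb * ((if Xa = ∅ then (1 : A) else 0) * opSumD T T' (Xb \ Zb)) := by
        intro Zb _
        rw [Finset.sum_add_distrib, Finset.sum_add_distrib,
          ← Finset.mul_sum, ← Finset.sum_mul, convL T hT1 Xa,
          ← Finset.mul_sum, ← Finset.sum_mul, convLD T T' hT1 hT'0 Xa,
          ← Finset.mul_sum, ← Finset.sum_mul, convL T hT1 Xa,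
          zero_mul, mul_zero, zero_add]
      rw [Finset.sum_congr rfl hinner]
      by_cases hXa : Xa = ∅
      · simp only [if_pos hXa, one_mul]
        exact convLD T T' hT1 hT'0 Xb
      · simp [if_neg hXa]
    have hnot : (Xa ∪ Xb).powerset.filter (fun Z => ¬ Z ≠ ∅) = {∅} :=
      filter_eq_empty_powerset _
    rw [← Finset.sum_filter_add_sum_filter_not (Xa ∪ Xb).powerset (fun Z => Z ≠ ∅)]
      at hsum
    have hne : ∀ Z ∈ (Xa ∪ Xb).powerset.filter (fun Y => Y ≠ ∅),
        T' Z * (opSum T (Xa \ Z) * opSum T (Xb \ Z))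
          + T Z * (opSumD T T' (Xa \ Z) * opSum T (Xb \ Z)
              + opSum T (Xa \ Z) * opSumD T T' (Xb \ Z))
        = T' Z * opSum T ((Xa ∪ Xb) \ Z) + T Z * opSumD T T' ((Xa ∪ Xb) \ Z) := by
      intro Z hZ
      rw [Finset.mem_filter, Finset.mem_powerset] at hZ
      have hcard2 : ((Xa \ Z) ∪ (Xb \ Z)).card ≤ N := by
        rw [← union_sdiff_split]
        have h3 : ((Xa ∪ Xb) \ Z).card = (Xa ∪ Xb).card - Z.card := by
          rw [Finset.card_sdiff, Finset.inter_eq_left.mpr hZ.1]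
        have h4 : 0 < Z.card := Finset.card_pos.mpr (Finset.nonempty_iff_ne_empty.mpr hZ.2)
        have h5 : Z.card ≤ (Xa ∪ Xb).card := Finset.card_le_card hZ.1
        omega
      rw [union_sdiff_split, ihN (Xa \ Z) (Xb \ Z) (Finset.sdiff_subset.trans ha)
        (Finset.sdiff_subset.trans hb) hcard2,
        opSum_factor T hT1 hd hfac (Xa \ Z) (Finset.sdiff_subset.trans ha) (Xb \ Z)
          (Finset.sdiff_subset.trans hb)]
    rw [Finset.sum_congr rfl hne, opSumD_rec T T' (Xa ∪ Xb), hnot, Finset.sum_singleton,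
      hT'0, hT1, zero_mul, one_mul, Finset.sdiff_empty, Finset.sdiff_empty,
      zero_add] at hsum
    exact neg_add_eq_zero.mp hsum

end Helpers4
section Assembly

open Finset

variable {A : Type*} [Ring A] {ι : Type*} [Fintype ι] [DecidableEq ι]

lemma neg_one_pow_absorb_left (k : ℕ) (x y z w : A) :
    (-1 : A) ^ k * (x * ((-1 : A) ^ k * y) + z * ((-1 : A) ^ k * w)) = x * y + z * w := by
  rcases Nat.even_or_odd k with h | h
  · rw [h.neg_one_pow]; simp
  · rw [h.neg_one_pow]
    simp [neg_mul, mul_neg, neg_add, add_comm]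

lemma neg_one_pow_absorb_right (k : ℕ) (x y z w : A) :
    (-1 : A) ^ k * (((-1 : A) ^ k * y) * x + ((-1 : A) ^ k * w) * z) = y * x + w * z := by
  rcases Nat.even_or_odd k with h | h
  · rw [h.neg_one_pow]; simp
  · rw [h.neg_one_pow]
    simp [neg_mul, mul_neg, neg_add, add_comm]

lemma advPD_eq (T T' : Finset ι → A) (hT1 : T ∅ = 1) (hT'0 : T' ∅ = 0)
    (m : ι) (P Q : Finset ι) (hdPQ : Disjoint P Q) (hmP : m ∉ P) (_hmQ : m ∉ Q)
    (hPQ : P ∪ Q = Finset.univ.erase m) (hP : P ≠ ∅)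
    (hfacT : ∀ Za ⊆ P, ∀ Zb ⊆ insert m Q, T (Za ∪ Zb) = T Zb * T Za)
    (hfacT' : ∀ Za ⊆ P, ∀ Zb ⊆ insert m Q,
      T' (Za ∪ Zb) = T' Zb * T Za + T Zb * T' Za) :
    advPD T T' m = -(T' (insert m Q) * T P + T (insert m Q) * T' P) := by
  have huniv : P ∪ insert m Q = Finset.univ := by
    rw [Finset.union_insert, hPQ, Finset.insert_erase (Finset.mem_univ m)]
  have hsplit : ∀ i : ι, i ∈ P ∨ i ∈ insert m Q := by
    intro i
    have h := Finset.mem_univ i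
    rw [← huniv] at h
    exact Finset.mem_union.mp h
  have hdisj : Disjoint P (insert m Q) :=
    Finset.disjoint_insert_right.mpr ⟨hmP, hdPQ⟩
  have hfacQ : ∀ Za ⊆ P, ∀ Zb ⊆ Q, T (Za ∪ Zb) = T Zb * T Za :=
    fun Za ha Zb hb => hfacT Za ha Zb (hb.trans (Finset.subset_insert m Q))
  have hfacQ' : ∀ Za ⊆ P, ∀ Zb ⊆ Q, T' (Za ∪ Zb) = T' Zb * T Za + T Zb * T' Za :=
    fun Za ha Zb hb => hfacT' Za ha Zb (hb.trans (Finset.subset_insert m Q))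
  have hstepA : advPD T T' m = ∑ Y ∈ (P ∪ Q).powerset.filter (fun Y => Y ≠ ∅),
      (T' Yᶜ * opSum T Y + T Yᶜ * opSumD T T' Y) := by
    rw [advPD, ← hPQ]
    exact Finset.sum_congr rfl (fun Y _ => neg_one_pow_absorb_left Y.card
      (T' Yᶜ) (opSum T Y) (T Yᶜ) (opSumD T T' Y))
  have hcompl : ∀ Ya ⊆ P, ∀ Yb ⊆ Q,
      (Ya ∪ Yb)ᶜ = (P \ Ya) ∪ (insert m Q \ Yb) := by
    intro Ya hYa Yb hYb
    ext i
    have h1 := hsplit i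
    have h2 : ¬(i ∈ P ∧ i ∈ insert m Q) := fun h =>
      (Finset.disjoint_left.mp hdisj h.1) h.2
    have h3 : i ∈ Ya → i ∈ P := fun h => hYa h
    have h4 : i ∈ Yb → i ∈ insert m Q := fun h =>
      Finset.mem_insert_of_mem (hYb h)
    simp only [Finset.mem_compl, Finset.mem_union, Finset.mem_sdiff]
    tauto
  have hstepC : ∑ Y ∈ (P ∪ Q).powerset,
      (T' Yᶜ * opSum T Y + T Yᶜ * opSumD T T' Y) = 0 := by
    rw [sum_powerset_union hdPQ (fun Y => T' Yᶜ * opSum T Y + T Yᶜ * opSumD T T' Y)]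
    have hbody : ∀ Ya ∈ P.powerset, ∀ Yb ∈ Q.powerset,
        T' (Ya ∪ Yb)ᶜ * opSum T (Ya ∪ Yb) + T (Ya ∪ Yb)ᶜ * opSumD T T' (Ya ∪ Yb)
        = T' (insert m Q \ Yb) * ((T (P \ Ya) * opSum T Ya) * opSum T Yb)
          + (T (insert m Q \ Yb) * ((T' (P \ Ya) * opSum T Ya
                + T (P \ Ya) * opSumD T T' Ya) * opSum T Yb)
            + T (insert m Q \ Yb) * ((T (P \ Ya) * opSum T Ya) * opSumD T T' Yb)) := by
      intro Ya hYa Yb hYb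
      rw [Finset.mem_powerset] at hYa hYb
      rw [hcompl Ya hYa Yb hYb,
        hfacT (P \ Ya) Finset.sdiff_subset (insert m Q \ Yb) Finset.sdiff_subset,
        hfacT' (P \ Ya) Finset.sdiff_subset (insert m Q \ Yb) Finset.sdiff_subset,
        opSum_factor T hT1 hdPQ hfacQ Ya hYa Yb hYb,
        opSumD_factor T T' hT1 hT'0 hdPQ hfacQ hfacQ' Ya hYa Yb hYb]
      noncomm_ring
    rw [Finset.sum_congr rfl (fun Ya hYa => Finset.sum_congr rfl (hbody Ya hYa)),
      Finset.sum_comm]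
    have hkey : ∑ Ya ∈ P.powerset, T (P \ Ya) * opSum T Ya = 0 := by
      have h1 : ∀ Ya ∈ P.powerset, T (P \ Ya) * opSum T Ya
          = (fun Z => T Z * opSum T (P \ Z)) (P \ Ya) := by
        intro Ya hYa
        dsimp only
        rw [Finset.sdiff_sdiff_eq_self (Finset.mem_powerset.mp hYa)]
      rw [Finset.sum_congr rfl h1,
        sum_powerset_sdiff P (fun Z => T Z * opSum T (P \ Z)), convL T hT1 P, if_neg hP]
    have hkeyD : ∑ Ya ∈ P.powerset,
        (T' (P \ Ya) * opSum T Ya + T (P \ Ya) * opSumD T T' Ya) = 0 := by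
      have h1 : ∀ Ya ∈ P.powerset,
          T' (P \ Ya) * opSum T Ya + T (P \ Ya) * opSumD T T' Ya
          = (fun Z => T' Z * opSum T (P \ Z) + T Z * opSumD T T' (P \ Z)) (P \ Ya) := by
        intro Ya hYa
        dsimp only
        rw [Finset.sdiff_sdiff_eq_self (Finset.mem_powerset.mp hYa)]
      rw [Finset.sum_congr rfl h1,
        sum_powerset_sdiff P
          (fun Z => T' Z * opSum T (P \ Z) + T Z * opSumD T T' (P \ Z)),
        convLD T T' hT1 hT'0 P]
    have hinner : ∀ Yb ∈ Q.powerset,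
        ∑ Ya ∈ P.powerset,
          (T' (insert m Q \ Yb) * ((T (P \ Ya) * opSum T Ya) * opSum T Yb)
            + (T (insert m Q \ Yb) * ((T' (P \ Ya) * opSum T Ya
                  + T (P \ Ya) * opSumD T T' Ya) * opSum T Yb)
              + T (insert m Q \ Yb) * ((T (P \ Ya) * opSum T Ya) * opSumD T T' Yb)))
        = 0 := by
      intro Yb _
      rw [Finset.sum_add_distrib, Finset.sum_add_distrib,
        ← Finset.mul_sum, ← Finset.sum_mul, hkey,
        ← Finset.mul_sum, ← Finset.sum_mul, hkeyD,
        ← Finset.mul_sum, ← Finset.sum_mul, hkey]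
      simp
    rw [Finset.sum_congr rfl hinner, Finset.sum_const_zero]
  have hF0 : T' (∅ : Finset ι)ᶜ * opSum T ∅ + T (∅ : Finset ι)ᶜ * opSumD T T' ∅
      = T' (insert m Q) * T P + T (insert m Q) * T' P := by
    rw [Finset.compl_empty, opSum_empty, opSumD_empty, mul_one, mul_zero, add_zero,
      ← huniv, hfacT' P (Finset.Subset.refl P) (insert m Q) (Finset.Subset.refl _)]
  rw [hstepA]
  have hsum2 := Finset.sum_filter_add_sum_filter_not (P ∪ Q).powerset (fun Z => Z ≠ ∅)
    (fun Y => T' Yᶜ * opSum T Y + T Yᶜ * opSumD T T' Y)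
  rw [hstepC, filter_eq_empty_powerset, Finset.sum_singleton, hF0] at hsum2
  exact eq_neg_of_add_eq_zero_left hsum2

lemma retPD_eq (T T' : Finset ι → A) (hT1 : T ∅ = 1) (hT'0 : T' ∅ = 0)
    (m : ι) (P Q : Finset ι) (hdPQ : Disjoint P Q) (hmP : m ∉ P) (_hmQ : m ∉ Q)
    (hPQ : P ∪ Q = Finset.univ.erase m) (hP : P ≠ ∅)
    (hfacT : ∀ Za ⊆ insert m Q, ∀ Zb ⊆ P, T (Za ∪ Zb) = T Zb * T Za)
    (hfacT' : ∀ Za ⊆ insert m Q, ∀ Zb ⊆ P,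
      T' (Za ∪ Zb) = T' Zb * T Za + T Zb * T' Za) :
    retPD T T' m = -(T' P * T (insert m Q) + T P * T' (insert m Q)) := by
  have huniv : insert m Q ∪ P = Finset.univ := by
    rw [Finset.insert_union, Finset.union_comm, hPQ,
      Finset.insert_erase (Finset.mem_univ m)]
  have hsplit : ∀ i : ι, i ∈ P ∨ i ∈ insert m Q := by
    intro i
    have h := Finset.mem_univ i
    rw [← huniv] at h
    exact (Finset.mem_union.mp h).symm
  have hdisj : Disjoint P (insert m Q) :=
    Finset.disjoint_insert_right.mpr ⟨hmP, hdPQ⟩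
  have hfacQ : ∀ Za ⊆ Q, ∀ Zb ⊆ P, T (Za ∪ Zb) = T Zb * T Za :=
    fun Za ha Zb hb => hfacT Za (ha.trans (Finset.subset_insert m Q)) Zb hb
  have hfacQ' : ∀ Za ⊆ Q, ∀ Zb ⊆ P, T' (Za ∪ Zb) = T' Zb * T Za + T Zb * T' Za :=
    fun Za ha Zb hb => hfacT' Za (ha.trans (Finset.subset_insert m Q)) Zb hb
  have hstepA : retPD T T' m = ∑ Y ∈ (Q ∪ P).powerset.filter (fun Y => Y ≠ ∅),
      (opSumD T T' Y * T Yᶜ + opSum T Y * T' Yᶜ) := by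
    rw [retPD, ← Finset.union_comm P Q, ← hPQ]
    exact Finset.sum_congr rfl (fun Y _ => neg_one_pow_absorb_right Y.card
      (T Yᶜ) (opSumD T T' Y) (T' Yᶜ) (opSum T Y))
  have hcompl : ∀ Yb ⊆ Q, ∀ Ya ⊆ P,
      (Yb ∪ Ya)ᶜ = (insert m Q \ Yb) ∪ (P \ Ya) := by
    intro Yb hYb Ya hYa
    ext i
    have h1 := hsplit i
    have h2 : ¬(i ∈ P ∧ i ∈ insert m Q) := fun h =>
      (Finset.disjoint_left.mp hdisj h.1) h.2
    have h3 : i ∈ Ya → i ∈ P := fun h => hYa h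
    have h4 : i ∈ Yb → i ∈ insert m Q := fun h =>
      Finset.mem_insert_of_mem (hYb h)
    simp only [Finset.mem_compl, Finset.mem_union, Finset.mem_sdiff]
    tauto
  have hstepC : ∑ Y ∈ (Q ∪ P).powerset,
      (opSumD T T' Y * T Yᶜ + opSum T Y * T' Yᶜ) = 0 := by
    rw [sum_powerset_union hdPQ.symm
      (fun Y => opSumD T T' Y * T Yᶜ + opSum T Y * T' Yᶜ)]
    have hbody : ∀ Yb ∈ Q.powerset, ∀ Ya ∈ P.powerset,
        opSumD T T' (Yb ∪ Ya) * T (Yb ∪ Ya)ᶜ + opSum T (Yb ∪ Ya) * T' (Yb ∪ Ya)ᶜ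
        = opSumD T T' Yb * ((opSum T Ya * T (P \ Ya)) * T (insert m Q \ Yb))
          + (opSum T Yb * ((opSumD T T' Ya * T (P \ Ya)
                + opSum T Ya * T' (P \ Ya)) * T (insert m Q \ Yb))
            + opSum T Yb * ((opSum T Ya * T (P \ Ya)) * T' (insert m Q \ Yb))) := by
      intro Yb hYb Ya hYa
      rw [Finset.mem_powerset] at hYa hYb
      rw [hcompl Yb hYb Ya hYa,
        hfacT (insert m Q \ Yb) Finset.sdiff_subset (P \ Ya) Finset.sdiff_subset,
        hfacT' (insert m Q \ Yb) Finset.sdiff_subset (P \ Ya) Finset.sdiff_subset,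
        opSum_factor T hT1 hdPQ.symm hfacQ Yb hYb Ya hYa,
        opSumD_factor T T' hT1 hT'0 hdPQ.symm hfacQ hfacQ' Yb hYb Ya hYa]
      noncomm_ring
    rw [Finset.sum_congr rfl (fun Yb hYb => Finset.sum_congr rfl (hbody Yb hYb))]
    have hkey : ∑ Ya ∈ P.powerset, opSum T Ya * T (P \ Ya) = 0 := by
      rw [convR T hT1 P, if_neg hP]
    have hkeyD : ∑ Ya ∈ P.powerset,
        (opSumD T T' Ya * T (P \ Ya) + opSum T Ya * T' (P \ Ya)) = 0 :=
      convRD T T' hT1 hT'0 P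
    have hinner : ∀ Yb ∈ Q.powerset,
        ∑ Ya ∈ P.powerset,
          (opSumD T T' Yb * ((opSum T Ya * T (P \ Ya)) * T (insert m Q \ Yb))
            + (opSum T Yb * ((opSumD T T' Ya * T (P \ Ya)
                  + opSum T Ya * T' (P \ Ya)) * T (insert m Q \ Yb))
              + opSum T Yb * ((opSum T Ya * T (P \ Ya)) * T' (insert m Q \ Yb))))
        = 0 := by
      intro Yb _
      rw [Finset.sum_add_distrib, Finset.sum_add_distrib,
        ← Finset.mul_sum, ← Finset.sum_mul, hkey,
        ← Finset.mul_sum, ← Finset.sum_mul, hkeyD,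
        ← Finset.mul_sum, ← Finset.sum_mul, hkey]
      simp
    rw [Finset.sum_congr rfl hinner, Finset.sum_const_zero]
  have hF0 : opSumD T T' ∅ * T (∅ : Finset ι)ᶜ + opSum T ∅ * T' (∅ : Finset ι)ᶜ
      = T' P * T (insert m Q) + T P * T' (insert m Q) := by
    rw [Finset.compl_empty, opSum_empty, opSumD_empty, zero_mul, one_mul, zero_add,
      ← huniv, hfacT' (insert m Q) (Finset.Subset.refl _) P (Finset.Subset.refl P)]
  rw [hstepA]
  have hsum2 := Finset.sum_filter_add_sum_filter_not (Q ∪ P).powerset (fun Z => Z ≠ ∅)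
    (fun Y => opSumD T T' Y * T Yᶜ + opSum T Y * T' Yᶜ)
  rw [hstepC, filter_eq_empty_powerset, Finset.sum_singleton, hF0] at hsum2
  exact eq_neg_of_add_eq_zero_left hsum2

end Assembly
/-- For a partition `P ⊔ Q = {1,…,n−1}` with `P ≠ ∅` and `Qn := Q ∪ {n}`: if `x(Qn) ≥ x(P)`
then `A′_{n,l} = −[T'_l(Qn)·T(P) + T(Qn)·T'_l(P)]` for every `l`, and if `x(P) ≥ x(Qn)` then
`R′_{n,l} = −[T'_l(P)·T(Qn) + T(P)·T'_l(Qn)]` for every `l`. -/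
theorem advPD_retPD_eq_of_causality {A : Type*} [Ring A] (n : ℕ) (hn : 0 < n)
    (x : Fin n → Fin 4 → ℝ) (T : Finset (Fin n) → A) (hT1 : T ∅ = 1)
    (T' : Fin n → Finset (Fin n) → A) (hT'0 : ∀ l, ∀ X : Finset (Fin n), l ∉ X → T' l X = 0)
    (hcausT : ∀ S₁ S₂ : Finset (Fin n), Disjoint S₁ S₂ →
      (∀ i ∈ S₁, ∀ j ∈ S₂, x i - x j ∉ closure Vminus) → T (S₁ ∪ S₂) = T S₁ * T S₂)
    (hcausT' : ∀ l, ∀ S₁ S₂ : Finset (Fin n), Disjoint S₁ S₂ →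
      (∀ i ∈ S₁, ∀ j ∈ S₂, x i - x j ∉ closure Vminus) →
        T' l (S₁ ∪ S₂) = T' l S₁ * T S₂ + T S₁ * T' l S₂)
    (P Q : Finset (Fin n)) (hd : Disjoint P Q)
    (hPQ : P ∪ Q = Finset.univ.erase ⟨n - 1, by omega⟩) (hP : P ≠ ∅) :
    ((∀ i ∈ insert (⟨n - 1, by omega⟩ : Fin n) Q, ∀ j ∈ P, x i - x j ∉ closure Vminus) →
      ∀ l, advPD T (T' l) ⟨n - 1, by omega⟩ =
        -(T' l (insert ⟨n - 1, by omega⟩ Q) * T P + T (insert ⟨n - 1, by omega⟩ Q) * T' l P)) ∧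
    ((∀ i ∈ P, ∀ j ∈ insert (⟨n - 1, by omega⟩ : Fin n) Q, x i - x j ∉ closure Vminus) →
      ∀ l, retPD T (T' l) ⟨n - 1, by omega⟩ =
        -(T' l P * T (insert ⟨n - 1, by omega⟩ Q) + T P * T' l (insert ⟨n - 1, by omega⟩ Q))) := by

  have hT'empty : ∀ l, T' l ∅ = 0 := fun l => hT'0 l ∅ (Finset.notMem_empty l)
  have hmPQ : (⟨n - 1, by omega⟩ : Fin n) ∉ P ∪ Q := by
    rw [hPQ]; exact Finset.notMem_erase _ _
  have hmP : (⟨n - 1, by omega⟩ : Fin n) ∉ P :=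
    fun h => hmPQ (Finset.mem_union_left Q h)
  have hmQ : (⟨n - 1, by omega⟩ : Fin n) ∉ Q :=
    fun h => hmPQ (Finset.mem_union_right P h)
  have hdisjQmP : Disjoint (insert (⟨n - 1, by omega⟩ : Fin n) Q) P :=
    Finset.disjoint_insert_left.mpr ⟨hmP, hd.symm⟩
  constructor
  · intro hx l
    refine advPD_eq T (T' l) hT1 (hT'empty l) _ P Q hd hmP hmQ hPQ hP ?_ ?_
    · intro Za hZa Zb hZb
      rw [Finset.union_comm]
      exact hcausT Zb Za (hdisjQmP.mono hZb hZa)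
        (fun i hi j hj => hx i (hZb hi) j (hZa hj))
    · intro Za hZa Zb hZb
      rw [Finset.union_comm]
      exact hcausT' l Zb Za (hdisjQmP.mono hZb hZa)
        (fun i hi j hj => hx i (hZb hi) j (hZa hj))
  · intro hx l
    refine retPD_eq T (T' l) hT1 (hT'empty l) _ P Q hd hmP hmQ hPQ hP ?_ ?_
    · intro Za hZa Zb hZb
      rw [Finset.union_comm]
      exact hcausT Zb Za (hdisjQmP.symm.mono hZb hZa)
        (fun i hi j hj => hx i (hZb hi) j (hZa hj))
    · intro Za hZa Zb hZb
      rw [Finset.union_comm]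
      exact hcausT' l Zb Za (hdisjQmP.symm.mono hZb hZa)
        (fun i hi j hj => hx i (hZb hi) j (hZa hj))
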